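/- arXiv:1511.02604 — 2 statements merged into one kernel-verified Lean document; each statement's English description precedes it below -/
import Mathlib

section
/- Let L ∈ ℝ^{n×n} be the Laplacian of a weighted digraph and let q ∈ ℝ_{>0}^n satisfy qᵀL = 0. If x : [0,∞) → ℝ_{>0}^n is a differentiable solution of the entropic protocol ẋ_i = −Σ_{j} w_{ij} x_i ln(x_i/x_j), then the quantity Σ_{i=1}^n q_i ln x_i(t) is constant in time. -/
open Real Finset Set

/-- If `q ∈ ℝ_{>0}^n` is a left null vector of the Laplacian `L = D − W` of a weighted
digraph, and `x : [0,∞) → ℝ_{>0}^n` solves the entropic protocol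
`ẋ i = −∑ j, w i j * x i * ln(x i / x j)`, then `∑ i, q i * ln (x t i)` is constant. -/
theorem entropic_protocol_invariant (n : ℕ) (w : Fin n → Fin n → ℝ)
    (hw : ∀ i j, 0 ≤ w i j) (q : Fin n → ℝ) (hq : ∀ i, 0 < q i)
    (hqL : ∀ j, ∑ i, q i * ((if i = j then ∑ k, w i k else 0) - w i j) = 0)
    (x : ℝ → Fin n → ℝ) (hpos : ∀ t ∈ Set.Ici (0 : ℝ), ∀ i, 0 < x t i)
    (hode : ∀ t ∈ Set.Ici (0 : ℝ), ∀ i,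
      HasDerivAt (fun s => x s i)
        (-∑ j, w i j * x t i * Real.log (x t i / x t j)) t) :
    ∀ t ∈ Set.Ici (0 : ℝ), ∀ s ∈ Set.Ici (0 : ℝ),
      ∑ i, q i * Real.log (x t i) = ∑ i, q i * Real.log (x s i) := by
  have hq' : ∀ j, ∑ i, q i * w i j = q j * ∑ k, w j k := by
    intro j
    have h := hqL j
    simp only [mul_sub, Finset.sum_sub_distrib, mul_ite, mul_zero, sub_eq_zero,
      Finset.sum_ite_eq', Finset.mem_univ, if_true] at h
    exact h.symm
  set F : ℝ → ℝ := fun u => ∑ i, q i * Real.log (x u i) with hF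
  have key : ∀ u ∈ Set.Ici (0:ℝ), HasDerivWithinAt F 0 (Set.Ici (0:ℝ)) u := by
    intro u hu
    have hx := hpos u hu
    have hne : ∀ i, x u i ≠ 0 := fun i => (hx i).ne'
    have hF' : HasDerivAt F
        (∑ i, q i * ((-∑ j, w i j * x u i * Real.log (x u i / x u j)) / x u i)) u := by
      apply HasDerivAt.fun_sum
      intro i _
      exact ((hode u hu i).log (hne i)).const_mul (q i)
    have hzero : (∑ i, q i * ((-∑ j, w i j * x u i * Real.log (x u i / x u j)) / x u i)) = 0 := by
      have step : ∀ i, q i * ((-∑ j, w i j * x u i * Real.log (x u i / x u j)) / x u i)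
          = ∑ j, q i * w i j * (Real.log (x u j) - Real.log (x u i)) := by
        intro i
        have hdiv : (∑ j, w i j * x u i * Real.log (x u i / x u j)) / x u i
            = ∑ j, w i j * (Real.log (x u i) - Real.log (x u j)) := by
          rw [Finset.sum_div]
          refine Finset.sum_congr rfl fun j _ => ?_
          rw [Real.log_div (hne i) (hne j), mul_comm (w i j) (x u i), mul_assoc,
            mul_div_cancel_left₀ _ (hne i)]
        rw [neg_div, hdiv, mul_neg, Finset.mul_sum, ← Finset.sum_neg_distrib]
        exact Finset.sum_congr rfl fun j _ => by ring
      calc ∑ i, q i * ((-∑ j, w i j * x u i * Real.log (x u i / x u j)) / x u i)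
          = ∑ i, ∑ j, q i * w i j * (Real.log (x u j) - Real.log (x u i)) :=
            Finset.sum_congr rfl fun i _ => step i
        _ = (∑ j, (∑ i, q i * w i j) * Real.log (x u j))
            - ∑ i, (∑ j, q i * w i j) * Real.log (x u i) := by
            simp only [mul_sub, Finset.sum_sub_distrib, Finset.sum_mul]
            rw [Finset.sum_comm]
        _ = 0 := by
            simp only [hq']
            rw [sub_eq_zero]
            exact Finset.sum_congr rfl fun i _ => by rw [← Finset.mul_sum]
    exact (hzero ▸ hF').hasDerivWithinAt
  have main : ∀ u ∈ Set.Ici (0:ℝ), F u = F 0 := by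
    intro u hu
    have hcont : ContinuousOn F (Set.Icc 0 u) := fun v hv =>
      ((key v hv.1).continuousWithinAt).mono (fun y hy => hy.1)
    have hderiv : ∀ v ∈ Set.Ico 0 u, HasDerivWithinAt F 0 (Set.Ici v) v := fun v hv =>
      (key v hv.1).mono (Set.Ici_subset_Ici.mpr hv.1)
    exact constant_of_has_deriv_right_zero hcont hderiv u ⟨hu, le_rfl⟩
  intro t ht s hs
  exact (main t ht).trans (main s hs).symm
end

section
/- Let L be the Laplacian of a weighted digraph with qᵀL = 0, q ∈ ℝ_{>0}^n. If x(t) solves the entropic protocol ẋ_i = −Σ_j w_{ij} x_i ln(x_i/x_j) on ℝ_{>0}^n and x(t) converges to a consensus point x̄·1 with x̄ > 0 as t → ∞, then x̄ = Π_{i=1}^n x_i(0)^{q̂_i}, where q̂ = q/‖q‖_1, i.e., the consensus value is the weighted geometric mean of the initial condition. -/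
open Real Finset Set Filter Topology

/-- If `qᵀL = 0` with `q > 0`, and `x(t)` solves the entropic protocol on `ℝ_{>0}^n`
converging to a consensus point `x̄·1` with `x̄ > 0`, then
`x̄ = ∏ i, x 0 i ^ (q i / ∑ j, q j)`: the consensus value is the weighted geometric
mean of the initial condition. -/
theorem entropic_protocol_weighted_geometric_mean_consensus (n : ℕ) (hn : 0 < n)
    (w : Fin n → Fin n → ℝ) (hw : ∀ i j, 0 ≤ w i j)
    (q : Fin n → ℝ) (hq : ∀ i, 0 < q i)
    (hqL : ∀ j, ∑ i, q i * ((if i = j then ∑ k, w i k else 0) - w i j) = 0)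
    (x : ℝ → Fin n → ℝ) (hpos : ∀ t ∈ Set.Ici (0 : ℝ), ∀ i, 0 < x t i)
    (hode : ∀ t ∈ Set.Ici (0 : ℝ), ∀ i,
      HasDerivAt (fun s => x s i)
        (-∑ j, w i j * x t i * Real.log (x t i / x t j)) t)
    (xbar : ℝ) (hxbar : 0 < xbar)
    (hlim : ∀ i, Filter.Tendsto (fun t => x t i) Filter.atTop (𝓝 xbar)) :
    xbar = ∏ i, x 0 i ^ (q i / ∑ j, q j) := by
  have hne : (Finset.univ : Finset (Fin n)).Nonempty := by
    simpa [Finset.univ_nonempty_iff] using Fin.pos_iff_nonempty.mp hn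
  set Q : ℝ := ∑ j, q j with hQdef
  have hQpos : 0 < Q := Finset.sum_pos (fun i _ => hq i) hne
  -- column identity from qᵀL = 0
  have hcol : ∀ j, ∑ i, q i * w i j = q j * ∑ k, w j k := by
    intro j
    have h := hqL j
    have h1 : ∑ i, q i * ((if i = j then ∑ k, w i k else 0) - w i j)
        = (∑ i, q i * (if i = j then ∑ k, w i k else 0)) - ∑ i, q i * w i j := by
      rw [← Finset.sum_sub_distrib]
      exact Finset.sum_congr rfl fun i _ => by ring
    have h2 : ∑ i, q i * (if i = j then ∑ k, w i k else 0) = q j * ∑ k, w j k := by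
      simp [mul_ite, mul_zero]
    rw [h1, h2] at h
    linarith
  set F : ℝ → ℝ := fun t => ∑ i, q i * Real.log (x t i) with hFdef
  -- derivative of F is zero on [0, ∞)
  have hF : ∀ t ∈ Set.Ici (0 : ℝ), HasDerivAt F 0 t := by
    intro t ht
    have hx : ∀ i, 0 < x t i := hpos t ht
    have h0 : HasDerivAt F
        (∑ i, q i * ((-∑ j, w i j * x t i * Real.log (x t i / x t j)) / x t i)) t :=
      HasDerivAt.fun_sum fun i _ => ((hode t ht i).log (hx i).ne').const_mul (q i)
    have hterm : ∀ i, q i * ((-∑ j, w i j * x t i * Real.log (x t i / x t j)) / x t i)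
        = ∑ j, (q i * w i j * Real.log (x t j) - q i * w i j * Real.log (x t i)) := by
      intro i
      rw [neg_div, Finset.sum_div, ← Finset.sum_neg_distrib, Finset.mul_sum]
      refine Finset.sum_congr rfl fun j _ => ?_
      rw [Real.log_div (hx i).ne' (hx j).ne']
      field_simp [(hx i).ne']
      ring
    have hval : (∑ i, q i * ((-∑ j, w i j * x t i * Real.log (x t i / x t j)) / x t i)) = 0 := by
      simp only [hterm]
      simp only [Finset.sum_sub_distrib]
      have hA : ∑ i, ∑ j, q i * w i j * Real.log (x t j)
          = ∑ j, (∑ i, q i * w i j) * Real.log (x t j) := by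
        rw [Finset.sum_comm]
        exact Finset.sum_congr rfl fun j _ => by rw [Finset.sum_mul]
      have hB : ∑ i, ∑ j, q i * w i j * Real.log (x t i)
          = ∑ i, (∑ j, q i * w i j) * Real.log (x t i) := by
        exact Finset.sum_congr rfl fun i _ => by rw [Finset.sum_mul]
      rw [hA, hB, sub_eq_zero]
      refine Finset.sum_congr rfl fun j _ => ?_
      rw [hcol j, ← Finset.mul_sum]
    rw [hval] at h0
    exact h0
  -- F is constant on [0, ∞)
  have hconst : ∀ T ∈ Set.Ici (0 : ℝ), F T = F 0 := by
    intro T hT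
    have hcont : ContinuousOn F (Set.Icc 0 T) := fun s hs =>
      ((hF s (Set.mem_Ici.mpr hs.1)).continuousAt).continuousWithinAt
    have hderiv : ∀ s ∈ Set.Ico (0 : ℝ) T, HasDerivWithinAt F 0 (Set.Ici s) s := fun s hs =>
      (hF s (Set.mem_Ici.mpr hs.1)).hasDerivWithinAt
    exact constant_of_has_deriv_right_zero hcont hderiv T (Set.mem_Icc.mpr ⟨hT, le_refl T⟩)
  -- limit of F
  have hlimF : Filter.Tendsto F Filter.atTop (𝓝 (Q * Real.log xbar)) := by
    have : Q * Real.log xbar = ∑ i, q i * Real.log xbar := by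
      rw [hQdef, Finset.sum_mul]
    rw [this]
    exact tendsto_finset_sum _ fun i _ =>
      (((Real.continuousAt_log hxbar.ne').tendsto.comp (hlim i)).const_mul (q i))
  have hlimF' : Filter.Tendsto F Filter.atTop (𝓝 (F 0)) := by
    apply Filter.Tendsto.congr' _ tendsto_const_nhds
    filter_upwards [Filter.eventually_ge_atTop (0 : ℝ)] with t ht
    exact (hconst t ht).symm
  have hkey : Q * Real.log xbar = F 0 := tendsto_nhds_unique hlimF hlimF'
  -- conclude
  have hx0 : ∀ i, 0 < x 0 i := hpos 0 Set.self_mem_Ici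
  have hlog : Real.log xbar = ∑ i, (q i / Q) * Real.log (x 0 i) := by
    have : Real.log xbar = F 0 / Q := by
      field_simp
      linarith [hkey]
    rw [this, hFdef]
    simp only [Finset.sum_div]
    exact Finset.sum_congr rfl fun i _ => by ring
  have : xbar = Real.exp (∑ i, (q i / Q) * Real.log (x 0 i)) := by
    rw [← hlog, Real.exp_log hxbar]
  rw [this, Real.exp_sum]
  exact Finset.prod_congr rfl fun i _ => by
    rw [Real.rpow_def_of_pos (hx0 i)]
    ring_nf
end
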